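/- Analytic core of Proposition 1 (Capacity-Constrained Accuracy Bound): let N ≥ 1 be a natural number, P_eff ≥ 0 a real number, and p : Fin N → ℝ a family of marginal error probabilities with 0 ≤ p i ≤ 1 for all i, satisfying the Fano-type constraint N · log 2 − P_eff · log 2 ≤ ∑_{i} binEntropy (p i) (i.e., in bits, N − P_eff ≤ ∑_i h₂(P_{e,i})). Then the expected accuracy A := 1 − (1/N) · ∑_{i} p i satisfies A ≤ 1/2 + √((log 2 / 2) · (P_eff / N)). -/

import Mathlib

open Real Set Finset

private lemma aux_h_deriv (x : ℝ) (hx0 : 0 < x) (hx1 : x < 1) :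
    HasDerivAt (fun q : ℝ => Real.log q - Real.log (1 - q) - 4 * q + 2)
      (1/x + 1/(1-x) - 4) x := by
  have h1 : HasDerivAt Real.log (1/x) x := by
    simpa [one_div] using Real.hasDerivAt_log hx0.ne'
  have h2 : HasDerivAt (fun q : ℝ => Real.log (1 - q)) (-(1/(1-x))) x := by
    have := (Real.hasDerivAt_log (by linarith : (1:ℝ) - x ≠ 0)).comp x
      ((hasDerivAt_const x (1:ℝ)).sub (hasDerivAt_id x))
    exact this.congr_deriv (by ring)
  have := ((h1.sub h2).sub ((hasDerivAt_id x).const_mul 4)).add_const 2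
  exact this.congr_deriv (by ring)

private lemma aux_h_deriv_pos (y : ℝ) (hy0 : 0 < y) (hy1 : y < 1) (hy : y ≠ 1/2) :
    0 < 1/y + 1/(1-y) - 4 := by
  have h1y : (0:ℝ) < 1 - y := by linarith
  have key : 1/y + 1/(1-y) - 4 = (2*y-1)^2 / (y*(1-y)) := by
    field_simp; ring
  rw [key]
  have : 2*y - 1 ≠ 0 := by intro h; apply hy; linarith
  positivity

private lemma aux_h_sign (x : ℝ) (hx0 : 0 < x) (hx1 : x < 1) :
    (x < 1/2 → Real.log x - Real.log (1 - x) - 4 * x + 2 < 0) ∧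
    (1/2 < x → 0 < Real.log x - Real.log (1 - x) - 4 * x + 2) := by
  set h : ℝ → ℝ := fun q => Real.log q - Real.log (1 - q) - 4 * q + 2 with hh
  have hhalf : h (1/2) = 0 := by
    simp only [hh]
    norm_num
  constructor
  · intro hlt
    have hmono : StrictMonoOn h (Icc x (1/2)) := by
      apply strictMonoOn_of_deriv_pos (convex_Icc _ _)
      · intro y hy
        exact (aux_h_deriv y (lt_of_lt_of_le hx0 hy.1) (by linarith [hy.2])).continuousAt.continuousWithinAt
      · intro y hy
        rw [interior_Icc] at hy
        rw [(aux_h_deriv y (hx0.trans hy.1) (by linarith [hy.2])).deriv]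
        exact aux_h_deriv_pos y (hx0.trans hy.1) (by linarith [hy.2]) (ne_of_lt hy.2)
    have := hmono (by constructor <;> linarith) (by constructor <;> linarith) hlt
    rwa [hhalf] at this
  · intro hlt
    have hmono : StrictMonoOn h (Icc (1/2) x) := by
      apply strictMonoOn_of_deriv_pos (convex_Icc _ _)
      · intro y hy
        exact (aux_h_deriv y (by linarith [hy.1]) (lt_of_le_of_lt hy.2 hx1)).continuousAt.continuousWithinAt
      · intro y hy
        rw [interior_Icc] at hy
        rw [(aux_h_deriv y (by linarith [hy.1]) (hy.2.trans hx1)).deriv]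
        exact aux_h_deriv_pos y (by linarith [hy.1]) (hy.2.trans hx1) (ne_of_gt hy.1)
    have := hmono (by constructor <;> linarith) (by constructor <;> linarith) hlt
    rwa [hhalf] at this

/-- Pinsker-type bound: binEntropy q ≤ log 2 - 2 (q - 1/2)². -/
private lemma binEntropy_le_pinsker (q : ℝ) (hq0 : 0 ≤ q) (hq1 : q ≤ 1) :
    Real.binEntropy q ≤ Real.log 2 - 2 * (q - 1/2)^2 := by
  set F : ℝ → ℝ := fun x => Real.log 2 - 2 * (x - 1/2)^2 - Real.binEntropy x with hF
  suffices h : 0 ≤ F q by simp only [hF] at h; linarith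
  have hFhalf : F (1/2) = 0 := by
    simp only [hF]
    rw [show (1:ℝ)/2 = 2⁻¹ by norm_num, Real.binEntropy_two_inv]
    ring
  have hFcont : Continuous F := by
    have := Real.binEntropy_continuous
    fun_prop
  have hFderiv : ∀ x ∈ Ioo (0:ℝ) 1, HasDerivAt F
      (Real.log x - Real.log (1 - x) - 4 * x + 2) x := by
    intro x hx
    have hb : HasDerivAt Real.binEntropy (Real.log (1 - x) - Real.log x) x :=
      Real.hasDerivAt_binEntropy (ne_of_gt hx.1) (ne_of_lt hx.2)
    have hq : HasDerivAt (fun y : ℝ => Real.log 2 - 2 * (y - 1/2)^2) (-(4*x - 2)) x := by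
      have : HasDerivAt (fun y : ℝ => (y - 1/2)^2) (2 * (x - 1/2)) x := by
        exact (((hasDerivAt_id x).sub_const (1/2)).pow 2).congr_deriv (by simp)
      have := (this.const_mul 2).const_sub (Real.log 2)
      exact this.congr_deriv (by ring)
    have := hq.sub hb
    exact this.congr_deriv (by ring)
  rcases le_or_gt q (1/2) with hq | hq
  · have hanti : StrictAntiOn F (Icc (0:ℝ) (1/2)) := by
      apply strictAntiOn_of_deriv_neg (convex_Icc _ _) (hFcont.continuousOn)
      intro y hy
      rw [interior_Icc] at hy
      rw [(hFderiv y ⟨hy.1, by linarith [hy.2]⟩).deriv]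
      exact (aux_h_sign y hy.1 (by linarith [hy.2])).1 hy.2
    rcases eq_or_lt_of_le hq with rfl | hq'
    · rw [hFhalf]
    · have := hanti ⟨hq0, hq⟩ (by constructor <;> norm_num) hq'
      rw [hFhalf] at this
      linarith
  · have hmono : StrictMonoOn F (Icc (1/2:ℝ) 1) := by
      apply strictMonoOn_of_deriv_pos (convex_Icc _ _) (hFcont.continuousOn)
      intro y hy
      rw [interior_Icc] at hy
      rw [(hFderiv y ⟨by linarith [hy.1], hy.2⟩).deriv]
      exact (aux_h_sign y (by linarith [hy.1]) hy.2).2 hy.1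
    have := hmono (by constructor <;> norm_num) ⟨hq.le, hq1⟩ hq
    rw [hFhalf] at this
    linarith

/-- Analytic core of Proposition 1 (Capacity-Constrained Accuracy Bound). -/
theorem capacity_constrained_accuracy_bound (N : ℕ) (hN : 1 ≤ N) (Peff : ℝ)
    (hP : 0 ≤ Peff) (p : Fin N → ℝ) (hp : ∀ i, 0 ≤ p i ∧ p i ≤ 1)
    (hFano : (N : ℝ) * Real.log 2 - Peff * Real.log 2 ≤ ∑ i, Real.binEntropy (p i)) :
    1 - (1 / (N : ℝ)) * ∑ i, p i
      ≤ 1/2 + Real.sqrt ((Real.log 2 / 2) * (Peff / (N : ℝ))) := by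
  have hN0 : (0:ℝ) < N := by exact_mod_cast hN
  set q : ℝ := (1 / (N : ℝ)) * ∑ i, p i with hq
  -- Jensen (concavity of binEntropy)
  have hjensen : ∑ i, Real.binEntropy (p i) ≤ (N : ℝ) * Real.binEntropy q := by
    have hconc : ConcaveOn ℝ (Icc (0:ℝ) 1) Real.binEntropy :=
      Real.strictConcave_binEntropy.concaveOn
    have := hconc.le_map_sum (t := Finset.univ) (w := fun _ : Fin N => 1 / (N : ℝ))
      (p := p) (fun i _ => by positivity)
      (by simp [Finset.card_univ]; field_simp)
      (fun i _ => ⟨(hp i).1, (hp i).2⟩)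
    simp only [smul_eq_mul] at this
    rw [← Finset.mul_sum, ← Finset.mul_sum] at this
    calc ∑ i, Real.binEntropy (p i)
        = (N:ℝ) * ((1 / (N:ℝ)) * ∑ i, Real.binEntropy (p i)) := by field_simp
      _ ≤ (N:ℝ) * Real.binEntropy q := by
          apply mul_le_mul_of_nonneg_left _ hN0.le
          exact this
  have hq0 : 0 ≤ q := by
    apply mul_nonneg (by positivity)
    exact Finset.sum_nonneg fun i _ => (hp i).1
  have hq1 : q ≤ 1 := by
    rw [hq]
    rw [one_div, inv_mul_le_iff₀ hN0, mul_one]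
    calc ∑ i, p i ≤ ∑ _i : Fin N, (1:ℝ) := Finset.sum_le_sum fun i _ => (hp i).2
      _ = (N:ℝ) := by simp
  -- Pinsker
  have hpinsker := binEntropy_le_pinsker q hq0 hq1
  have key : (q - 1/2)^2 ≤ (Real.log 2 / 2) * (Peff / (N:ℝ)) := by
    have h1 : (N:ℝ) * Real.log 2 - Peff * Real.log 2
        ≤ (N:ℝ) * (Real.log 2 - 2 * (q - 1/2)^2) := by
      calc (N:ℝ) * Real.log 2 - Peff * Real.log 2 ≤ ∑ i, Real.binEntropy (p i) := hFano
        _ ≤ (N : ℝ) * Real.binEntropy q := hjensen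
        _ ≤ (N:ℝ) * (Real.log 2 - 2 * (q - 1/2)^2) :=
            mul_le_mul_of_nonneg_left hpinsker hN0.le
    have h2 : (N:ℝ) * (2 * (q - 1/2)^2) ≤ Peff * Real.log 2 := by nlinarith
    rw [div_mul_div_comm, le_div_iff₀ (by positivity : (0:ℝ) < 2 * (N:ℝ))]
    nlinarith
  have habs : |q - 1/2| ≤ Real.sqrt ((Real.log 2 / 2) * (Peff / (N:ℝ))) := by
    rw [← Real.sqrt_sq_eq_abs]
    exact Real.sqrt_le_sqrt key
  have := abs_le.mp habs
  linarith [this.1]
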